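/- For all n ≥ 2 and all m ≥ l ≥ 0, the binomial-operator kernel at (n,2) satisfies C(n,2)(m,l) = Σ_{i=0}^{n−2} Σ_{j=0}^{n−2−i} F(m+i+j+2, l+i+j) · F(m+i+1, l+i), i.e., ⟨n 2⟩∗ = ⊞_{i=0}^{n−2} ⊞_{j=0}^{n−2−i} ∗_{i+j+2,i+j}∗_{i+1,i}. -/

import Mathlib

open Finset

/-- The ψ-factorial: ψₙ! = ψ₁ψ₂⋯ψₙ, with ψ₀! = 1. -/
noncomputable def psiFact (ψ : ℕ → ℂ) : ℕ → ℂ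
  | 0 => 1
  | n + 1 => psiFact ψ n * ψ (n + 1)

/-- The ψ-binomial coefficient binomψ(n,k) = ψₙ!/(ψₖ!·ψ_{n−k}!). -/
noncomputable def psiBinom (ψ : ℕ → ℂ) (n k : ℕ) : ℂ :=
  psiFact ψ n / (psiFact ψ k * psiFact ψ (n - k))

/-- The Fontané numbers F(n,k) = (ψₙ − ψₖ)/ψ_{n−k}. -/
noncomputable def Fker (ψ : ℕ → ℂ) (n k : ℕ) : ℂ :=
  (ψ n - ψ k) / ψ (n - k)

/-- The binomial-operator kernels C(n,k)(m,l) of the binomial operators ⟨n k⟩∗. -/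
noncomputable def Cker (ψ : ℕ → ℂ) : ℕ → ℕ → ℕ → ℕ → ℂ
  | _, 0, _, _ => 1
  | 0, _ + 1, _, _ => 0
  | n + 1, k + 1, m, l =>
      if k = n then ∏ i ∈ Finset.range (n + 1), Fker ψ (m + i + 1) l
      else Cker ψ n (k + 1) (m + 1) (l + 1) + Fker ψ (m + 1) l * Cker ψ n k (m + 1) l

/-- ⟨n 2⟩∗ = ⊞_{i=0}^{n−2} ⊞_{j=0}^{n−2−i} ∗_{i+j+2,i+j}∗_{i+1,i}:
C(n,2)(m,l) = Σ_{i=0}^{n−2} Σ_{j=0}^{n−2−i} F(m+i+j+2, l+i+j)·F(m+i+1, l+i). -/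
lemma Fker_congr (ψ : ℕ → ℂ) {a b c d : ℕ} (h1 : a = c) (h2 : b = d) :
    Fker ψ a b = Fker ψ c d := by rw [h1, h2]

lemma Cker_one (ψ : ℕ → ℂ) : ∀ n m l : ℕ,
    Cker ψ (n + 1) 1 m l = ∑ i ∈ Finset.range (n + 1), Fker ψ (m + i + 1) (l + i) := by
  intro n
  induction n with
  | zero => intro m l; simp [Cker]
  | succ t ih =>
    intro m l
    have h : Cker ψ (t + 2) 1 m l
        = Cker ψ (t + 1) 1 (m + 1) (l + 1) + Fker ψ (m + 1) l * 1 := by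
      simp [Cker]
    rw [h, ih]
    conv_rhs => rw [Finset.sum_range_succ']
    simp only [mul_one]
    congr 1
    · apply Finset.sum_congr rfl
      intro i _
      exact Fker_congr ψ (by omega) (by omega)

theorem Cker_n_two (ψ : ℕ → ℂ) (hψ0 : ψ 0 = 0) (hψ1 : ψ 1 = 1) (hψ : ∀ n : ℕ, 1 ≤ n → ψ n ≠ 0)
    (n : ℕ) (hn : 2 ≤ n) (m l : ℕ) (hlm : l ≤ m) :
    Cker ψ n 2 m l
      = ∑ i ∈ Finset.range (n - 1), ∑ j ∈ Finset.range (n - 1 - i),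
          Fker ψ (m + i + j + 2) (l + i + j) * Fker ψ (m + i + 1) (l + i) := by
  obtain ⟨t, rfl⟩ := Nat.exists_eq_add_of_le hn
  induction t generalizing m l with
  | zero =>
    simp [Cker, Finset.prod_range_succ, Finset.sum_range_succ]
    ring
  | succ t ih =>
    have h : Cker ψ (2 + (t + 1)) 2 m l
        = Cker ψ (2 + t) 2 (m + 1) (l + 1)
          + Fker ψ (m + 1) l * Cker ψ (t + 1 + 1) 1 (m + 1) l := by
      have e1 : 2 + (t + 1) = (t + 2) + 1 := by omega
      have e2 : 2 + t = t + 2 := by omega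
      rw [e1, e2]
      have : ¬ (1 = t + 2) := by omega
      simp [Cker, this]
    rw [h, ih (m + 1) (l + 1) (by omega) (by omega), Cker_one]
    have e3 : 2 + (t + 1) - 1 = (t + 1) + 1 := by omega
    rw [e3]
    conv_rhs => rw [Finset.sum_range_succ']
    have e5 : 2 + t - 1 = t + 1 := by omega
    rw [e5]
    congr 1
    · apply Finset.sum_congr rfl
      intro i _
      rw [show t + 1 + 1 - (i + 1) = t + 1 - i by omega]
      apply Finset.sum_congr rfl
      intro j _
      exact congrArg₂ (· * ·) (Fker_congr ψ (by omega) (by omega))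
        (Fker_congr ψ (by omega) (by omega))
    · rw [Finset.mul_sum]
      apply Finset.sum_congr rfl
      intro j _
      rw [mul_comm]
      exact congrArg₂ (· * ·) (Fker_congr ψ (by omega) (by omega))
        (Fker_congr ψ (by omega) (by omega))
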